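/- Let P be a symmetric transition matrix on a nonempty finite state space Ω (P x y = P y x for all x, y) satisfying the lumpability condition with respect to an equivalence relation ∼; let π be the uniform distribution on Ω and π̄ its pushforward on the quotient Ω̄ (so π̄(C) = |C| / |Ω|). For x ∈ Ω let 𝟙̄_x be the distribution that is uniform on the class [x] and zero elsewhere. Then for every x ∈ Ω and every t ∈ ℕ, d_V(𝟙̄_x P^t, π) = d_V(𝟙_{[x]} P̄^t, π̄). -/
import Mathlib


open Finset

noncomputable section

variable {Ω : Type*}

/-- The sum of `μ` over the equivalence class `C` of the setoid `s`. -/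
def Pushforward (s : Setoid Ω) [Fintype Ω] [DecidableEq (Quotient s)]
    (μ : Ω → ℝ) (C : Quotient s) : ℝ :=
  ∑ z ∈ Finset.univ.filter (fun z => Quotient.mk s z = C), μ z

/-- The lumpability condition. -/
def IsLumpable (s : Setoid Ω) [Fintype Ω] [DecidableEq (Quotient s)]
    (P : Ω → Ω → ℝ) : Prop :=
  ∀ x x' : Ω, s.r x x' → ∀ C : Quotient s,
    Pushforward s (P x) C = Pushforward s (P x') C

/-- The projected (lumped) transition matrix on the quotient. -/
def Proj (s : Setoid Ω) [Fintype Ω] [DecidableEq (Quotient s)]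
    (P : Ω → Ω → ℝ) (C D : Quotient s) : ℝ :=
  Pushforward s (P C.out) D

/-- One step of the Markov chain: `(μP)(y) = ∑ x, μ x * P x y`. -/
def Step {S : Type*} [Fintype S] (P : S → S → ℝ) (μ : S → ℝ) : S → ℝ :=
  fun y => ∑ x, μ x * P x y

/-- The one-point distribution at `x`. -/
def onePoint {S : Type*} [DecidableEq S] (x : S) : S → ℝ :=
  fun y => if y = x then 1 else 0

/-- The size of the equivalence class of `x`. -/
def classCard (s : Setoid Ω) [Fintype Ω] [DecidableEq (Quotient s)] (x : Ω) : ℕ :=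
  (Finset.univ.filter (fun z => Quotient.mk s z = Quotient.mk s x)).card

/-- The distribution that is uniform on the class of `x` and zero elsewhere. -/
def classUniform (s : Setoid Ω) [Fintype Ω] [DecidableEq (Quotient s)] (x : Ω) : Ω → ℝ :=
  fun y =>
    if Quotient.mk s y = Quotient.mk s x then 1 / (classCard s x : ℝ) else 0

/-- The uniform distribution on a finite set. -/
def uniformDist (S : Type*) [Fintype S] : S → ℝ :=
  fun _ => 1 / (Fintype.card S : ℝ)

/-- Total variation distance between two distributions on a finite set. -/
def dV {S : Type*} [Fintype S] (μ ν : S → ℝ) : ℝ :=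
  (1 / 2) * ∑ x, |μ x - ν x|

section Aux

variable {Ω : Type*} [Fintype Ω] (s : Setoid Ω) [DecidableEq (Quotient s)]
  [Fintype (Quotient s)]

/-- A function that is constant on equivalence classes. -/
def ClassConst (μ : Ω → ℝ) : Prop :=
  ∀ y y', Quotient.mk s y = Quotient.mk s y' → μ y = μ y'

lemma sum_fibers (f : Ω → ℝ) :
    ∑ C : Quotient s, ∑ z ∈ Finset.univ.filter (fun z => Quotient.mk s z = C), f z
      = ∑ z, f z :=
  Finset.sum_fiberwise _ _ _

lemma classConst_eq_out {μ : Ω → ℝ} (hμ : ClassConst s μ) {C : Quotient s} {z : Ω}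
    (hz : Quotient.mk s z = C) : μ z = μ C.out :=
  hμ _ _ (by rw [hz, Quotient.out_eq])

lemma pushforward_const {μ : Ω → ℝ} (hμ : ClassConst s μ) (C : Quotient s) :
    Pushforward s μ C
      = ((Finset.univ.filter (fun z => Quotient.mk s z = C)).card : ℝ) * μ C.out := by
  unfold Pushforward
  rw [Finset.sum_congr rfl (fun z hz => classConst_eq_out s hμ (Finset.mem_filter.mp hz).2),
    Finset.sum_const, nsmul_eq_mul]

lemma rel_out (x : Ω) : s.r x (Quotient.mk s x).out :=
  Quotient.exact (by rw [Quotient.out_eq])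

lemma pushforward_eq_proj (P : Ω → Ω → ℝ) (hlump : IsLumpable s P) (x : Ω) (C : Quotient s) :
    Pushforward s (P x) C = Proj s P (Quotient.mk s x) C :=
  hlump x _ (rel_out s x) C

lemma classConst_step (P : Ω → Ω → ℝ) (hsym : ∀ x y, P x y = P y x)
    (hlump : IsLumpable s P) {μ : Ω → ℝ} (hμ : ClassConst s μ) :
    ClassConst s (Step P μ) := by
  have key : ∀ y : Ω, Step P μ y = ∑ D : Quotient s, μ D.out * Pushforward s (P y) D := by
    intro y
    unfold Step
    rw [← sum_fibers s (fun x => μ x * P x y)]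
    refine Finset.sum_congr rfl fun D _ => ?_
    unfold Pushforward
    rw [Finset.mul_sum]
    refine Finset.sum_congr rfl fun z hz => ?_
    rw [classConst_eq_out s hμ (Finset.mem_filter.mp hz).2, hsym]
  intro y y' h
  rw [key, key]
  refine Finset.sum_congr rfl fun D _ => ?_
  rw [hlump y y' (Quotient.exact h) D]

lemma pushforward_step (P : Ω → Ω → ℝ) (hlump : IsLumpable s P)
    {μ : Ω → ℝ} (hμ : ClassConst s μ) (C : Quotient s) :
    Pushforward s (Step P μ) C = Step (Proj s P) (Pushforward s μ) C := by
  have h1 : Pushforward s (Step P μ) C = ∑ x, μ x * Pushforward s (P x) C := by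
    unfold Pushforward Step
    rw [Finset.sum_comm]
    exact Finset.sum_congr rfl fun x _ => (Finset.mul_sum _ _ _).symm
  rw [h1]
  unfold Step
  rw [← sum_fibers s (fun x => μ x * Pushforward s (P x) C)]
  refine Finset.sum_congr rfl fun D _ => ?_
  rw [pushforward_const s hμ, mul_assoc,
    Finset.sum_congr rfl (fun z hz => by
      have hz' := (Finset.mem_filter.mp hz).2
      rw [classConst_eq_out s hμ hz', pushforward_eq_proj s P hlump, hz']),
    Finset.sum_const, nsmul_eq_mul]

lemma classConst_classUniform (x : Ω) : ClassConst s (classUniform s x) := by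
  intro y y' h
  unfold classUniform
  rw [h]

lemma pushforward_classUniform (x : Ω) :
    Pushforward s (classUniform s x) = onePoint (Quotient.mk s x) := by
  funext C
  unfold Pushforward classUniform onePoint
  by_cases h : C = Quotient.mk s x
  · subst h
    rw [if_pos rfl]
    rw [Finset.sum_congr rfl (fun z hz => if_pos (Finset.mem_filter.mp hz).2),
      Finset.sum_const, nsmul_eq_mul]
    have hcard : (Finset.univ.filter
        (fun z => Quotient.mk s z = Quotient.mk s x)).card = classCard s x := rfl
    rw [hcard]
    have hpos : (0 : ℝ) < (classCard s x : ℝ) := by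
      have : x ∈ Finset.univ.filter (fun z => Quotient.mk s z = Quotient.mk s x) := by
        simp
      exact_mod_cast Finset.card_pos.mpr ⟨x, this⟩
    field_simp
  · rw [if_neg h]
    refine Finset.sum_eq_zero fun z hz => ?_
    rw [if_neg (by rw [(Finset.mem_filter.mp hz).2]; exact h)]

lemma dV_pushforward {μ ν : Ω → ℝ} (hμ : ClassConst s μ) (hν : ClassConst s ν) :
    dV μ ν = dV (Pushforward s μ) (Pushforward s ν) := by
  unfold dV
  congr 1
  rw [← sum_fibers s (fun z => |μ z - ν z|)]
  refine Finset.sum_congr rfl fun C _ => ?_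
  rw [pushforward_const s hμ, pushforward_const s hν, ← mul_sub, abs_mul,
    Nat.abs_cast]
  rw [Finset.sum_congr rfl (fun z hz => by
    rw [classConst_eq_out s hμ (Finset.mem_filter.mp hz).2,
      classConst_eq_out s hν (Finset.mem_filter.mp hz).2]),
    Finset.sum_const, nsmul_eq_mul]

end Aux

/-- for a symmetric lumpable transition matrix, the distance to
stationarity of the chain started from the uniform distribution on the class of `x`
equals the distance to stationarity of the projected chain started at the class of
`x`. -/
theorem dV_classUniform_eq_proj
    [Fintype Ω] [Nonempty Ω] (s : Setoid Ω) [DecidableEq (Quotient s)]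
    [Fintype (Quotient s)]
    (P : Ω → Ω → ℝ)
    (hP0 : ∀ x y, 0 ≤ P x y) (hP1 : ∀ x, ∑ y, P x y = 1)
    (hsym : ∀ x y, P x y = P y x)
    (hlump : IsLumpable s P) :
    ∀ (x : Ω) (t : ℕ),
      dV ((Step P)^[t] (classUniform s x)) (uniformDist Ω) =
        dV ((Step (Proj s P))^[t] (onePoint (Quotient.mk s x)))
          (Pushforward s (uniformDist Ω)) := by
  intro x t
  have key : ∀ t : ℕ, ClassConst s ((Step P)^[t] (classUniform s x)) ∧
      Pushforward s ((Step P)^[t] (classUniform s x)) =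
        (Step (Proj s P))^[t] (onePoint (Quotient.mk s x)) := by
    intro t
    induction t with
    | zero =>
      exact ⟨classConst_classUniform s x, pushforward_classUniform s x⟩
    | succ n ih =>
      rw [Function.iterate_succ_apply', Function.iterate_succ_apply']
      refine ⟨classConst_step s P hsym hlump ih.1, ?_⟩
      funext C
      rw [pushforward_step s P hlump ih.1 C, ih.2]
  have hunif : ClassConst s (uniformDist Ω) := fun _ _ _ => rfl
  rw [dV_pushforward s (key t).1 hunif, (key t).2]
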